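/- Let A be a unital *-algebra over C with ℚ ⊆ R, and (A[[λ]],⋆) a Hermitian formal deformation of A. If P₀ ∈ M_n(A) satisfies P₀² = P₀ = P₀*, then P := 1/2 + (P₀ - 1/2) ⋆ (1 + 4(P₀⋆P₀ - P₀))^{-1/2_⋆} is a well-defined element of M_n(A[[λ]]) with P ⋆ P = P = P* and P ≡ P₀ mod λ. In other words, every Hermitian projection deforms to a Hermitian projection of the deformed algebra. -/

import Mathlib

/-- A `*`-algebra over `K`: an associative unital `K`-algebra together with an
anti-linear involutive anti-automorphism `star`. -/
structure StarAlgebra (K : Type) [CommRing K] (conj : K → K)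
    (A : Type) [Ring A] [Algebra K A] : Type where
  star : A → A
  star_add : ∀ a b : A, star (a + b) = star a + star b
  star_mul : ∀ a b : A, star (a * b) = star b * star a
  star_star : ∀ a : A, star (star a) = a
  star_smul : ∀ (z : K) (a : A), star (z • a) = conj z • star a

/-- The formal deformation `f ⋆ g = Σ_r λ^r Σ_{i+j+k=r} C_k(f_i, g_j)` of an
algebra `A`, determined by a sequence of bilinear cochains `C_k`. -/
noncomputable def psMul {A : Type} [Ring A] (Cc : ℕ → A → A → A)
    (f g : PowerSeries A) : PowerSeries A :=
  PowerSeries.mk fun n =>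
    ∑ p ∈ Finset.HasAntidiagonal.antidiagonal n, ∑ q ∈ Finset.HasAntidiagonal.antidiagonal p.2,
      Cc p.1 (PowerSeries.coeff q.1 f) (PowerSeries.coeff q.2 g)

/-- The coefficientwise extension of a `*`-involution to `A[[λ]]`. -/
noncomputable def psStar {A : Type} [Ring A] (st : A → A) (f : PowerSeries A) :
    PowerSeries A :=
  PowerSeries.mk fun n => st (PowerSeries.coeff n f)

/-- The `*`-involution of matrices over a `*`-algebra: entrywise star composed
with transposition. -/
def mStar {A : Type} (st : A → A) {m : ℕ} (X : Matrix (Fin m) (Fin m) A) :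
    Matrix (Fin m) (Fin m) A :=
  Matrix.of fun i j => st (X j i)

/-- The matrix extension of the deformation cochains: deformed matrix
multiplication. -/
def matC {A : Type} [Ring A] (Cc : ℕ → A → A → A) (m : ℕ) :
    ℕ → Matrix (Fin m) (Fin m) A → Matrix (Fin m) (Fin m) A → Matrix (Fin m) (Fin m) A :=
  fun k X Y => Matrix.of (fun i j => ∑ l, Cc k (X i l) (Y l j))

namespace HP

structure DA (A : Type) [Ring A] : Type where
  Cc : ℕ → A → A → A
  st : A → A
  hC0 : ∀ a b : A, Cc 0 a b = a * b
  haddl : ∀ (k : ℕ) (a a' b : A), Cc k (a + a') b = Cc k a b + Cc k a' b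
  haddr : ∀ (k : ℕ) (a b b' : A), Cc k a (b + b') = Cc k a b + Cc k a b'
  hassoc : ∀ f g h : PowerSeries A,
    psMul Cc (psMul Cc f g) h = psMul Cc f (psMul Cc g h)
  honel : ∀ f : PowerSeries A, psMul Cc 1 f = f
  honer : ∀ f : PowerSeries A, psMul Cc f 1 = f
  hstadd : ∀ a b : A, st (a + b) = st a + st b
  hst1 : st 1 = 1
  hherm : ∀ f g : PowerSeries A,
    psStar st (psMul Cc f g) = psMul Cc (psStar st g) (psStar st f)

variable {A : Type} [Ring A]

def Aux (D : DA A) : Type := PowerSeries A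

instance (D : DA A) : AddCommGroup (Aux D) :=
  inferInstanceAs (AddCommGroup (PowerSeries A))

/-- coefficient of an element of `Aux D`. -/
noncomputable def co (D : DA A) (n : ℕ) (f : Aux D) : A :=
  PowerSeries.coeff n (show PowerSeries A from f)

lemma DA.czl (D : DA A) (k : ℕ) (b : A) : D.Cc k 0 b = 0 := by
  have := D.haddl k 0 0 b
  rw [add_zero] at this
  exact left_eq_add.mp this

lemma DA.czr (D : DA A) (k : ℕ) (b : A) : D.Cc k b 0 = 0 := by
  have := D.haddr k b 0 0
  rw [add_zero] at this
  exact left_eq_add.mp this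

lemma psMul_add_left (D : DA A) (f f' g : PowerSeries A) :
    psMul D.Cc (f + f') g = psMul D.Cc f g + psMul D.Cc f' g := by
  ext n
  simp only [psMul, PowerSeries.coeff_mk, map_add, D.haddl, Finset.sum_add_distrib]

lemma psMul_add_right (D : DA A) (f g g' : PowerSeries A) :
    psMul D.Cc f (g + g') = psMul D.Cc f g + psMul D.Cc f g' := by
  ext n
  simp only [psMul, PowerSeries.coeff_mk, map_add, D.haddr, Finset.sum_add_distrib]

lemma psMul_zero_left (D : DA A) (g : PowerSeries A) : psMul D.Cc 0 g = 0 := by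
  ext n
  simp [psMul, D.czl]

lemma psMul_zero_right (D : DA A) (f : PowerSeries A) : psMul D.Cc f 0 = 0 := by
  ext n
  simp [psMul, D.czr]

noncomputable instance ringAux (D : DA A) : Ring (Aux D) :=
  { (inferInstance : AddCommGroup (Aux D)) with
    mul := fun f g => (psMul D.Cc f g : PowerSeries A)
    one := (1 : PowerSeries A)
    mul_assoc := D.hassoc
    one_mul := D.honel
    mul_one := D.honer
    left_distrib := psMul_add_right D
    right_distrib := fun f f' g => psMul_add_left D f f' g
    zero_mul := psMul_zero_left D
    mul_zero := psMul_zero_right D }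

lemma mul_def (D : DA A) (f g : Aux D) : f * g = psMul D.Cc f g := rfl

lemma co_mul (D : DA A) (n : ℕ) (f g : Aux D) :
    co D n (f * g) = ∑ p ∈ Finset.HasAntidiagonal.antidiagonal n, ∑ q ∈ Finset.HasAntidiagonal.antidiagonal p.2,
      D.Cc p.1 (co D q.1 f) (co D q.2 g) := by
  simp only [mul_def, co, psMul, PowerSeries.coeff_mk]

lemma co_add (D : DA A) (n : ℕ) (f g : Aux D) :
    co D n (f + g) = co D n f + co D n g := map_add _ _ _

lemma co_one (D : DA A) (n : ℕ) :
    co D n (1 : Aux D) = if n = 0 then 1 else 0 := by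
  exact PowerSeries.coeff_one n (R := A)

lemma co_zero (D : DA A) (n : ℕ) : co D n (0 : Aux D) = 0 := map_zero _

end HP

namespace HP

variable {A : Type} [Ring A] {m : ℕ}

lemma co_zsmul (D : DA A) (n : ℕ) (z : ℤ) (f : Aux D) :
    co D n (z • f) = z • co D n f := by
  unfold co
  exact map_zsmul (PowerSeries.coeff n) z _

lemma co_sub (D : DA A) (n : ℕ) (f g : Aux D) :
    co D n (f - g) = co D n f - co D n g := map_sub _ _ _

lemma aux_ext (D : DA A) {f g : Aux D} (h : ∀ n, co D n f = co D n g) : f = g :=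
  PowerSeries.ext h

/-- equality of matrix power series up to order `N` (exclusive). -/
def EqN (D : DA A) (N : ℕ) (X Y : Matrix (Fin m) (Fin m) (Aux D)) : Prop :=
  ∀ n < N, ∀ i j, co D n (X i j) = co D n (Y i j)

lemma EqN.refl (D : DA A) (N : ℕ) (X : Matrix (Fin m) (Fin m) (Aux D)) : EqN D N X X :=
  fun _ _ _ _ => rfl

lemma EqN.symm {D : DA A} {N : ℕ} {X Y : Matrix (Fin m) (Fin m) (Aux D)}
    (h : EqN D N X Y) : EqN D N Y X := fun n hn i j => (h n hn i j).symm

lemma EqN.trans {D : DA A} {N : ℕ} {X Y Z : Matrix (Fin m) (Fin m) (Aux D)}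
    (h : EqN D N X Y) (h' : EqN D N Y Z) : EqN D N X Z :=
  fun n hn i j => (h n hn i j).trans (h' n hn i j)

lemma EqN.mono {D : DA A} {N N' : ℕ} {X Y : Matrix (Fin m) (Fin m) (Aux D)}
    (hNN : N' ≤ N) (h : EqN D N X Y) : EqN D N' X Y :=
  fun n hn i j => h n (lt_of_lt_of_le hn hNN) i j

lemma eq_of_eqN {D : DA A} {X Y : Matrix (Fin m) (Fin m) (Aux D)}
    (h : ∀ N, EqN D N X Y) : X = Y := by
  refine Matrix.ext fun i j => aux_ext D fun n => h (n+1) n (Nat.lt_succ_self n) i j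

lemma EqN.add {D : DA A} {N : ℕ} {X Y X' Y' : Matrix (Fin m) (Fin m) (Aux D)}
    (h : EqN D N X X') (h' : EqN D N Y Y') : EqN D N (X + Y) (X' + Y') := by
  intro n hn i j
  simp only [Matrix.add_apply, co_add, h n hn i j, h' n hn i j]

lemma EqN.sub {D : DA A} {N : ℕ} {X Y X' Y' : Matrix (Fin m) (Fin m) (Aux D)}
    (h : EqN D N X X') (h' : EqN D N Y Y') : EqN D N (X - Y) (X' - Y') := by
  intro n hn i j
  simp only [Matrix.sub_apply, co_sub, h n hn i j, h' n hn i j]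

lemma EqN.zsmul {D : DA A} {N : ℕ} (z : ℤ) {X X' : Matrix (Fin m) (Fin m) (Aux D)}
    (h : EqN D N X X') : EqN D N (z • X) (z • X') := by
  intro n hn i j
  simp only [Matrix.smul_apply, co_zsmul, h n hn i j]

lemma EqN.neg {D : DA A} {N : ℕ} {X X' : Matrix (Fin m) (Fin m) (Aux D)}
    (h : EqN D N X X') : EqN D N (-X) (-X') := by
  intro n hn i j
  simp only [Matrix.neg_apply, co, map_neg]
  exact congrArg Neg.neg (h n hn i j)

lemma co_matrix_mul (D : DA A) (n : ℕ) (X Y : Matrix (Fin m) (Fin m) (Aux D)) (i j : Fin m) :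
    co D n ((X * Y) i j) = ∑ l, ∑ p ∈ Finset.HasAntidiagonal.antidiagonal n, ∑ q ∈ Finset.HasAntidiagonal.antidiagonal p.2,
      D.Cc p.1 (co D q.1 (X i l)) (co D q.2 (Y l j)) := by
  rw [Matrix.mul_apply]
  rw [show co D n (∑ l, X i l * Y l j) = ∑ l, co D n (X i l * Y l j) from map_sum _ _ _]
  exact Finset.sum_congr rfl fun l _ => co_mul D n _ _

lemma EqN.mul {D : DA A} {N : ℕ} {X Y X' Y' : Matrix (Fin m) (Fin m) (Aux D)}
    (h : EqN D N X X') (h' : EqN D N Y Y') : EqN D N (X * Y) (X' * Y') := by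
  intro n hn i j
  rw [co_matrix_mul, co_matrix_mul]
  refine Finset.sum_congr rfl fun l _ => Finset.sum_congr rfl fun p hp =>
    Finset.sum_congr rfl fun q hq => ?_
  rw [Finset.HasAntidiagonal.mem_antidiagonal] at hp hq
  have hq1 : q.1 < N := by omega
  have hq2 : q.2 < N := by omega
  rw [h q.1 hq1 i l, h' q.2 hq2 l j]

/-- `X` has zero constant term. -/
def O1 (D : DA A) (X : Matrix (Fin m) (Fin m) (Aux D)) : Prop :=
  ∀ i j, co D 0 (X i j) = 0

lemma shiftL {D : DA A} {v Z : Matrix (Fin m) (Fin m) (Aux D)} (hv : O1 D v) {N : ℕ}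
    (h : EqN D N Z 0) : EqN D (N + 1) (v * Z) 0 := by
  intro n hn i j
  rw [co_matrix_mul]
  simp only [Matrix.zero_apply, co_zero]
  refine Finset.sum_eq_zero fun l _ => Finset.sum_eq_zero fun p hp =>
    Finset.sum_eq_zero fun q hq => ?_
  rw [Finset.HasAntidiagonal.mem_antidiagonal] at hp hq
  rcases Nat.eq_zero_or_pos q.1 with h1 | h1
  · rw [h1, hv i l, D.czl]
  · have : q.2 < N := by omega
    rw [h q.2 this l j, Matrix.zero_apply, co_zero, D.czr]

lemma shiftR {D : DA A} {v Z : Matrix (Fin m) (Fin m) (Aux D)} (hv : O1 D v) {N : ℕ}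
    (h : EqN D N Z 0) : EqN D (N + 1) (Z * v) 0 := by
  intro n hn i j
  rw [co_matrix_mul]
  simp only [Matrix.zero_apply, co_zero]
  refine Finset.sum_eq_zero fun l _ => Finset.sum_eq_zero fun p hp =>
    Finset.sum_eq_zero fun q hq => ?_
  rw [Finset.HasAntidiagonal.mem_antidiagonal] at hp hq
  rcases Nat.eq_zero_or_pos q.2 with h1 | h1
  · rw [h1, hv l j, D.czr]
  · have : q.1 < N := by omega
    rw [h q.1 this i l, Matrix.zero_apply, co_zero, D.czl]

lemma vanish {D : DA A} {Z : Matrix (Fin m) (Fin m) (Aux D)}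
    (h : ∀ N, EqN D N Z 0 → EqN D (N + 1) Z 0) : Z = 0 := by
  refine eq_of_eqN fun N => ?_
  induction N with
  | zero => exact fun n hn => absurd hn (Nat.not_lt_zero n)
  | succ k ih => exact h k ih

end HP

namespace HP

variable {A : Type} [Ring A] {m : ℕ}

/-- contractive maps on matrix power series -/
def Contr (D : DA A) (Φ : Matrix (Fin m) (Fin m) (Aux D) → Matrix (Fin m) (Fin m) (Aux D)) : Prop :=
  ∀ N Y Y', EqN D N Y Y' → EqN D (N + 1) (Φ Y) (Φ Y')

noncomputable def fixPt (D : DA A) (Φ : Matrix (Fin m) (Fin m) (Aux D) → Matrix (Fin m) (Fin m) (Aux D)) :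
    Matrix (Fin m) (Fin m) (Aux D) :=
  Matrix.of fun i j => (PowerSeries.mk fun n => co D n ((Φ^[n + 1] 1) i j) : PowerSeries A)

lemma co_fixPt (D : DA A) (Φ : Matrix (Fin m) (Fin m) (Aux D) → Matrix (Fin m) (Fin m) (Aux D))
    (n : ℕ) (i j : Fin m) : co D n (fixPt D Φ i j) = co D n ((Φ^[n + 1] 1) i j) := by
  simp only [fixPt, Matrix.of_apply, co]
  exact PowerSeries.coeff_mk (R := A) n (fun n => co D n ((Φ^[n + 1] 1) i j))

lemma fixPt_step {D : DA A} {Φ : Matrix (Fin m) (Fin m) (Aux D) → Matrix (Fin m) (Fin m) (Aux D)}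
    (hΦ : Contr D Φ) (k : ℕ) : EqN D k (Φ^[k] 1) (Φ^[k + 1] 1) := by
  induction k with
  | zero => exact fun n hn => absurd hn (Nat.not_lt_zero n)
  | succ k ih =>
    rw [Function.iterate_succ_apply', Function.iterate_succ_apply' Φ (k + 1)]
    exact hΦ k _ _ ih

lemma fixPt_chain {D : DA A} {Φ : Matrix (Fin m) (Fin m) (Aux D) → Matrix (Fin m) (Fin m) (Aux D)}
    (hΦ : Contr D Φ) (k M : ℕ) (h : k ≤ M) : EqN D k (Φ^[k] 1) (Φ^[M] 1) := by
  induction M with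
  | zero => rw [Nat.le_zero.mp h]; exact EqN.refl D _ _
  | succ M ih =>
    rcases Nat.lt_or_ge k (M + 1) with h' | h'
    · exact (ih (by omega)).trans ((fixPt_step hΦ M).mono (by omega))
    · have : k = M + 1 := by omega
      rw [this]; exact EqN.refl D _ _

lemma fixPt_approx {D : DA A} {Φ : Matrix (Fin m) (Fin m) (Aux D) → Matrix (Fin m) (Fin m) (Aux D)}
    (hΦ : Contr D Φ) (N : ℕ) : EqN D N (fixPt D Φ) (Φ^[N] 1) := by
  intro n hn i j
  rw [co_fixPt]
  exact fixPt_chain hΦ (n + 1) N hn n (Nat.lt_succ_self n) i j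

lemma fixPt_eq {D : DA A} {Φ : Matrix (Fin m) (Fin m) (Aux D) → Matrix (Fin m) (Fin m) (Aux D)}
    (hΦ : Contr D Φ) : Φ (fixPt D Φ) = fixPt D Φ := by
  refine eq_of_eqN fun N => ?_
  have h1 : EqN D (N + 1) (Φ (fixPt D Φ)) (Φ^[N + 1] 1) := by
    rw [Function.iterate_succ_apply']
    exact hΦ N _ _ (fixPt_approx hΦ N)
  exact ((h1.trans (fixPt_approx hΦ (N + 1)).symm).mono (Nat.le_succ N))

lemma fixPt_unique {D : DA A} {Φ : Matrix (Fin m) (Fin m) (Aux D) → Matrix (Fin m) (Fin m) (Aux D)}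
    (hΦ : Contr D Φ) {Y Y' : Matrix (Fin m) (Fin m) (Aux D)}
    (hY : Φ Y = Y) (hY' : Φ Y' = Y') : Y = Y' := by
  refine eq_of_eqN fun N => ?_
  induction N with
  | zero => exact fun n hn => absurd hn (Nat.not_lt_zero n)
  | succ k ih =>
    have := hΦ k Y Y' ih
    rwa [hY, hY'] at this

/-- star on `Aux D` -/
noncomputable def ast (D : DA A) (f : Aux D) : Aux D :=
  (psStar D.st (show PowerSeries A from f) : PowerSeries A)

lemma co_ast (D : DA A) (n : ℕ) (f : Aux D) : co D n (ast D f) = D.st (co D n f) := by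
  simp only [ast, co, psStar]
  exact PowerSeries.coeff_mk (R := A) _ _

lemma st_zero (D : DA A) : D.st 0 = 0 := by
  have := D.hstadd 0 0
  rw [add_zero] at this
  exact left_eq_add.mp this

lemma ast_add (D : DA A) (f g : Aux D) : ast D (f + g) = ast D f + ast D g := by
  refine aux_ext D fun n => ?_
  rw [co_ast, co_add, co_add, co_ast, co_ast, D.hstadd]

lemma ast_mul (D : DA A) (f g : Aux D) : ast D (f * g) = ast D g * ast D f := D.hherm f g

lemma ast_one (D : DA A) : ast D (1 : Aux D) = 1 := by
  refine aux_ext D fun n => ?_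
  rw [co_ast, co_one]
  split <;> simp [D.hst1, st_zero]

/-- star on matrices over `Aux D` -/
noncomputable def MS (D : DA A) (X : Matrix (Fin m) (Fin m) (Aux D)) :
    Matrix (Fin m) (Fin m) (Aux D) :=
  Matrix.of fun i j => ast D (X j i)

lemma MS_apply (D : DA A) (X : Matrix (Fin m) (Fin m) (Aux D)) (i j : Fin m) :
    MS D X i j = ast D (X j i) := rfl

lemma MS_add (D : DA A) (X Y : Matrix (Fin m) (Fin m) (Aux D)) :
    MS D (X + Y) = MS D X + MS D Y := by
  ext i j
  simp [MS_apply, Matrix.add_apply, ast_add]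

lemma MS_one (D : DA A) : MS D (1 : Matrix (Fin m) (Fin m) (Aux D)) = 1 := by
  ext i j
  rw [MS_apply, Matrix.one_apply, Matrix.one_apply]
  rcases eq_or_ne i j with h | h
  · subst h; simp [ast_one]
  · simp only [if_neg h, if_neg (Ne.symm h)]
    refine aux_ext D fun n => ?_
    rw [co_ast, co_zero, st_zero]

lemma MS_mul (D : DA A) (X Y : Matrix (Fin m) (Fin m) (Aux D)) :
    MS D (X * Y) = MS D Y * MS D X := by
  ext i j
  rw [MS_apply, Matrix.mul_apply, Matrix.mul_apply]
  rw [show ast D (∑ l, X j l * Y l i) = ∑ l, ast D (X j l * Y l i) by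
    exact map_sum (AddMonoidHom.mk' (ast D) (ast_add D)) _ _]
  exact Finset.sum_congr rfl fun l _ => by rw [ast_mul, MS_apply, MS_apply]

lemma MS_sub (D : DA A) (X Y : Matrix (Fin m) (Fin m) (Aux D)) :
    MS D (X - Y) = MS D X - MS D Y := by
  have h := AddMonoidHom.mk' (fun f => ast D f) (ast_add D)
  ext i j
  simp only [MS_apply, Matrix.sub_apply]
  exact map_sub (AddMonoidHom.mk' (fun f => ast D f) (ast_add D)) _ _

lemma MS_zsmul (D : DA A) (z : ℤ) (X : Matrix (Fin m) (Fin m) (Aux D)) :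
    MS D (z • X) = z • MS D X := by
  ext i j
  simp only [MS_apply, Matrix.smul_apply]
  exact map_zsmul (AddMonoidHom.mk' (fun f => ast D f) (ast_add D)) z _

end HP

namespace HP

variable {A : Type} [Ring A] {m : ℕ}

noncomputable def toMat (D : DA A) (F : PowerSeries (Matrix (Fin m) (Fin m) A)) :
    Matrix (Fin m) (Fin m) (Aux D) :=
  Matrix.of fun i j => (PowerSeries.mk fun n => (PowerSeries.coeff n F) i j : PowerSeries A)

lemma co_toMat (D : DA A) (F : PowerSeries (Matrix (Fin m) (Fin m) A)) (n : ℕ) (i j : Fin m) :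
    co D n (toMat D F i j) = (PowerSeries.coeff n F) i j := by
  simp only [toMat, Matrix.of_apply, co]
  exact PowerSeries.coeff_mk (R := A) n (fun n => (PowerSeries.coeff n F) i j)

lemma toMat_inj (D : DA A) {F G : PowerSeries (Matrix (Fin m) (Fin m) A)}
    (h : toMat D F = toMat D G) : F = G := by
  ext n i j
  have := congrArg (fun X => co D n (X i j)) h
  simpa only [co_toMat] using this

lemma toMat_mul (D : DA A) (F G : PowerSeries (Matrix (Fin m) (Fin m) A)) :
    toMat D (psMul (matC D.Cc m) F G) = toMat D F * toMat D G := by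
  refine Matrix.ext fun i j => aux_ext D fun n => ?_
  rw [co_toMat, co_matrix_mul]
  simp only [psMul, PowerSeries.coeff_mk, matC, Matrix.sum_apply, Matrix.of_apply, co_toMat]
  rw [Finset.sum_comm]
  exact Finset.sum_congr rfl fun p _ => Finset.sum_comm

lemma toMat_star (D : DA A) (F : PowerSeries (Matrix (Fin m) (Fin m) A)) :
    toMat D (psStar (mStar D.st) F) = MS D (toMat D F) := by
  refine Matrix.ext fun i j => aux_ext D fun n => ?_
  rw [co_toMat, MS_apply, co_ast, co_toMat]
  simp only [psStar, PowerSeries.coeff_mk, mStar, Matrix.of_apply]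

lemma co_mul_zero (D : DA A) (X Y : Matrix (Fin m) (Fin m) (Aux D)) (i j : Fin m) :
    co D 0 ((X * Y) i j) = ∑ l, co D 0 (X i l) * co D 0 (Y l j) := by
  rw [co_matrix_mul]
  refine Finset.sum_congr rfl fun l _ => ?_
  rw [Finset.Nat.antidiagonal_zero]
  simp [D.hC0]

end HP

namespace HP

variable {A : Type} [Ring A] {m : ℕ}

lemma shiftL' {D : DA A} {v Z Z' : Matrix (Fin m) (Fin m) (Aux D)} (hv : O1 D v) {N : ℕ}
    (h : EqN D N Z Z') : EqN D (N + 1) (v * Z) (v * Z') := by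
  intro n hn i j
  rw [co_matrix_mul, co_matrix_mul]
  refine Finset.sum_congr rfl fun l _ => Finset.sum_congr rfl fun p hp =>
    Finset.sum_congr rfl fun q hq => ?_
  rw [Finset.HasAntidiagonal.mem_antidiagonal] at hp hq
  rcases Nat.eq_zero_or_pos q.1 with h1 | h1
  · rw [h1, hv i l, D.czl, D.czl]
  · have : q.2 < N := by omega
    rw [h q.2 this l j]

lemma shiftR' {D : DA A} {v Z Z' : Matrix (Fin m) (Fin m) (Aux D)} (hv : O1 D v) {N : ℕ}
    (h : EqN D N Z Z') : EqN D (N + 1) (Z * v) (Z' * v) := by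
  intro n hn i j
  rw [co_matrix_mul, co_matrix_mul]
  refine Finset.sum_congr rfl fun l _ => Finset.sum_congr rfl fun p hp =>
    Finset.sum_congr rfl fun q hq => ?_
  rw [Finset.HasAntidiagonal.mem_antidiagonal] at hp hq
  rcases Nat.eq_zero_or_pos q.2 with h1 | h1
  · rw [h1, hv l j, D.czr, D.czr]
  · have : q.1 < N := by omega
    rw [h q.1 this i l]

lemma EqN.trans_eq {D : DA A} {N : ℕ} {X Y Z : Matrix (Fin m) (Fin m) (Aux D)}
    (h : EqN D N X Y) (e : Y = Z) : EqN D N X Z := e ▸ h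

lemma eqN_of_eq {D : DA A} (N : ℕ) {X Y : Matrix (Fin m) (Fin m) (Aux D)}
    (e : X = Y) : EqN D N X Y := e ▸ EqN.refl D N X

/-- the constant embedding `A → Aux D`. -/
noncomputable def cu (D : DA A) (a : A) : Aux D := (PowerSeries.C a : PowerSeries A)

lemma co_cu (D : DA A) (n : ℕ) (a : A) :
    co D n (cu D a) = if n = 0 then a else 0 := by
  simp only [cu, co]
  exact PowerSeries.coeff_C n a

lemma ast_cu (D : DA A) (a : A) : ast D (cu D a) = cu D (D.st a) := by
  refine aux_ext D fun n => ?_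
  rw [co_ast, co_cu, co_cu]
  split
  · rfl
  · exact st_zero D

/-- constant matrix embedding. -/
noncomputable def emb (D : DA A) (Q : Matrix (Fin m) (Fin m) A) :
    Matrix (Fin m) (Fin m) (Aux D) :=
  Matrix.of fun i j => cu D (Q i j)

lemma co_emb (D : DA A) (Q : Matrix (Fin m) (Fin m) A) (n : ℕ) (i j : Fin m) :
    co D n (emb D Q i j) = if n = 0 then Q i j else 0 := co_cu D n (Q i j)

end HP

namespace HP
variable {A : Type} [Ring A] {m : ℕ}

lemma O1.mulR {D : DA A} {v : Matrix (Fin m) (Fin m) (Aux D)} (hv : O1 D v)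
    (Z : Matrix (Fin m) (Fin m) (Aux D)) : O1 D (v * Z) := by
  intro i j
  rw [co_mul_zero]
  exact Finset.sum_eq_zero fun l _ => by rw [hv i l, zero_mul]

lemma O1.mulL {D : DA A} {v : Matrix (Fin m) (Fin m) (Aux D)} (hv : O1 D v)
    (Z : Matrix (Fin m) (Fin m) (Aux D)) : O1 D (Z * v) := by
  intro i j
  rw [co_mul_zero]
  exact Finset.sum_eq_zero fun l _ => by rw [hv l j, mul_zero]

end HP

open HP

set_option maxHeartbeats 2000000 in
/-- let `A` be a unital `*`-algebra over `C` with `ℚ ⊆ R`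
(encoded: the positive integers are invertible scalars), and let `⋆` (given by
cochains `Cc`) be a Hermitian formal deformation of `A`. If
`P₀ ∈ M_n(A)` satisfies `P₀² = P₀ = P₀*`, then (via the formula
`P = 1/2 + (P₀ - 1/2) ⋆ (1 + 4(P₀ ⋆ P₀ - P₀))^{-1/2_⋆}`) there is a
well-defined `P ∈ M_n(A[[λ]])` with `P ⋆ P = P = P*` and `P ≡ P₀ mod λ`:
every Hermitian projection deforms to a Hermitian projection of the deformed
algebra. -/
theorem hermitian_projection_deforms (K : Type) [CommRing K] (conjK : K → K)
    (hQ : ∀ n : ℕ, n ≠ 0 → IsUnit (n : K))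
    (A : Type) [Ring A] [Algebra K A] (sa : StarAlgebra K conjK A)
    (Cc : ℕ → A → A → A)
    (hC0 : ∀ a b : A, Cc 0 a b = a * b)
    (hCaddl : ∀ (k : ℕ) (a a' b : A), Cc k (a + a') b = Cc k a b + Cc k a' b)
    (hCaddr : ∀ (k : ℕ) (a b b' : A), Cc k a (b + b') = Cc k a b + Cc k a b')
    (hCsmull : ∀ (k : ℕ) (z : K) (a b : A), Cc k (z • a) b = z • Cc k a b)
    (hCsmulr : ∀ (k : ℕ) (z : K) (a b : A), Cc k a (z • b) = z • Cc k a b)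
    (hassoc : ∀ f g h : PowerSeries A,
      psMul Cc (psMul Cc f g) h = psMul Cc f (psMul Cc g h))
    (honel : ∀ f : PowerSeries A, psMul Cc 1 f = f)
    (honer : ∀ f : PowerSeries A, psMul Cc f 1 = f)
    (hherm : ∀ f g : PowerSeries A,
      psStar sa.star (psMul Cc f g)
        = psMul Cc (psStar sa.star g) (psStar sa.star f))
    (m : ℕ) (P₀ : Matrix (Fin m) (Fin m) A)
    (hProj : P₀ * P₀ = P₀) (hHerm : mStar sa.star P₀ = P₀) :
    ∃ P : PowerSeries (Matrix (Fin m) (Fin m) A),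
      PowerSeries.coeff 0 P = P₀ ∧
      psMul (matC Cc m) P P = P ∧
      psStar (mStar sa.star) P = P := by
    classical
  -- star fixes 1
  have hx1 : ∀ x : A, x = x * sa.star 1 := by
    intro x
    have h := sa.star_mul 1 (sa.star x)
    rw [one_mul, sa.star_star] at h
    exact h
  have st1 : sa.star 1 = 1 := by
    have := hx1 1
    rw [one_mul] at this
    exact this.symm
  obtain ⟨D, hD⟩ : ∃ D : DA A, D =
      ⟨Cc, sa.star, hC0, hCaddl, hCaddr, hassoc, honel, honer, sa.star_add, st1, hherm⟩ :=
    ⟨_, rfl⟩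
  -- basic elements
  obtain ⟨u, hu⟩ : ∃ u : Matrix (Fin m) (Fin m) (Aux D), u = emb D P₀ := ⟨_, rfl⟩
  obtain ⟨x, hxdef⟩ : ∃ x : Matrix (Fin m) (Fin m) (Aux D), x = u * u - u := ⟨_, rfl⟩
  have hstP₀ : ∀ i j, sa.star (P₀ j i) = P₀ i j := by
    intro i j
    have := congrFun (congrFun (congrArg (fun M => (M : Matrix (Fin m) (Fin m) A)) hHerm) i) j
    simpa [mStar] using this
  have hDCc : D.Cc = Cc := by rw [hD]
  have hDst : D.st = sa.star := by rw [hD]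
  have hx0 : O1 D x := by
    intro i j
    rw [hxdef, Matrix.sub_apply, co_sub, co_mul_zero]
    have : ∀ l, co D 0 (u i l) * co D 0 (u l j) = P₀ i l * P₀ l j := by
      intro l; rw [hu, co_emb, co_emb]; simp
    rw [Finset.sum_congr rfl fun l _ => this l, hu, co_emb]
    simp only [if_pos rfl]
    rw [← Matrix.mul_apply, hProj]; simp
  -- the Catalan-type fixed point g = 1 - (x*g)*g
  have hCg : Contr D (fun Y => 1 - (x * Y) * Y) := by
    intro N Y Y' h
    refine (EqN.refl D (N+1) 1).sub ?_
    have h1 : EqN D (N + 1) (x * Y) (x * Y') := shiftL' hx0 h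
    have h2 : EqN D (N + 1) ((x * Y) * Y) ((x * Y) * Y') :=
      shiftL' (hx0.mulR Y) h
    exact h2.trans (EqN.mul h1 (EqN.refl D (N+1) Y'))
  obtain ⟨g, hgdef⟩ :
      ∃ g : Matrix (Fin m) (Fin m) (Aux D), g = fixPt D (fun Y => 1 - (x * Y) * Y) := ⟨_, rfl⟩
  have hgfix : 1 - (x * g) * g = g := by rw [hgdef]; exact fixPt_eq hCg
  -- x commutes with g
  have hxg : x * g = g * x := by
    have key : x * g - g * x =
        -((x * (g * (x * g - g * x) + (x * g - g * x) * g))) := by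
      conv_lhs => rw [← hgfix]
      noncomm_ring
    have hz : x * g - g * x = 0 := by
      refine vanish fun N hN => ?_
      have h1 : EqN D N (g * (x * g - g * x) + (x * g - g * x) * g) 0 := by
        have := ((EqN.refl D N g).mul hN).add (hN.mul (EqN.refl D N g))
        exact this.trans_eq (by simp)
      have h2 := (shiftL hx0 h1).neg
      exact (eqN_of_eq (N+1) key).trans (h2.trans_eq (by simp))
    exact sub_eq_zero.mp hz
  -- u commutes with x and g
  have hux : u * x = x * u := by rw [hxdef]; noncomm_ring
  have hug : u * g = g * u := by
    have key : u * g - g * u =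
        x * (-(g * (u * g - g * u)) - (u * g - g * u) * g) := by
      have e1 : u * ((x * g) * g) = x * (u * (g * g)) := by
        calc u * ((x * g) * g) = (u * x) * (g * g) := by noncomm_ring
          _ = (x * u) * (g * g) := by rw [hux]
          _ = x * (u * (g * g)) := by noncomm_ring
      calc u * g - g * u = ((x * g) * g) * u - u * ((x * g) * g) := by
            conv_lhs => rw [← hgfix]
            noncomm_ring
        _ = x * ((g * g) * u) - x * (u * (g * g)) := by
            rw [e1, show ((x*g)*g)*u = x*((g*g)*u) from by noncomm_ring]
        _ = x * (-(g * (u * g - g * u)) - (u * g - g * u) * g) := by noncomm_ring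
    have hz : u * g - g * u = 0 := by
      refine vanish fun N hN => ?_
      have h1 : EqN D N (-(g * (u * g - g * u)) - (u * g - g * u) * g) 0 := by
        have := (((EqN.refl D N g).mul hN).neg).sub (hN.mul (EqN.refl D N g))
        exact this.trans_eq (by simp)
      exact (eqN_of_eq (N+1) key).trans (shiftL hx0 h1)
    exact sub_eq_zero.mp hz
  -- the element h = x*g, of order ≥ 1
  obtain ⟨h, hhdef⟩ : ∃ h : Matrix (Fin m) (Fin m) (Aux D), h = x * g := ⟨_, rfl⟩
  have hh0 : O1 D h := by rw [hhdef]; exact hx0.mulR g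
  have hxgg : (x * g) * g = 1 - g := by
    conv_rhs => rw [← hgfix]
    noncomm_ring
  have hF2 : h * h + h = x := by
    calc h * h + h = x * ((g * x) * g) + x * g := by rw [hhdef]; noncomm_ring
      _ = x * ((x * g) * g) + x * g := by rw [← hxg]
      _ = x * ((1 - g) + g) := by rw [hxgg]; noncomm_ring
      _ = x := by rw [sub_add_cancel, mul_one]
  have huh : u * h = h * u := by
    calc u * h = (u * x) * g := by rw [hhdef]; noncomm_ring
      _ = x * (u * g) := by rw [hux]; noncomm_ring
      _ = x * (g * u) := by rw [hug]
      _ = h * u := by rw [hhdef]; noncomm_ring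
  -- the inverse square root W, as fixed point of Y ↦ 1 - (h*Y + h*Y)
  have hCW : Contr D (fun Y => 1 - (h * Y + h * Y)) := by
    intro N Y Y' hYY
    have h1 : EqN D (N + 1) (h * Y) (h * Y') := shiftL' hh0 hYY
    exact (EqN.refl D (N+1) 1).sub (h1.add h1)
  obtain ⟨W, hWdef⟩ :
      ∃ W : Matrix (Fin m) (Fin m) (Aux D), W = fixPt D (fun Y => 1 - (h * Y + h * Y)) := ⟨_, rfl⟩
  have hWfix : 1 - (h * W + h * W) = W := by rw [hWdef]; exact fixPt_eq hCW
  have hCW' : Contr D (fun Y => 1 - (Y * h + Y * h)) := by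
    intro N Y Y' hYY
    have h1 : EqN D (N + 1) (Y * h) (Y' * h) := shiftR' hh0 hYY
    exact (EqN.refl D (N+1) 1).sub (h1.add h1)
  obtain ⟨W', hW'def⟩ :
      ∃ W' : Matrix (Fin m) (Fin m) (Aux D), W' = fixPt D (fun Y => 1 - (Y * h + Y * h)) := ⟨_, rfl⟩
  have hW'fix : 1 - (W' * h + W' * h) = W' := by rw [hW'def]; exact fixPt_eq hCW'
  have ehW : h * W + h * W = 1 - W := by
    conv_rhs => rw [← hWfix]
    noncomm_ring
  have ehW' : W' * h + W' * h = 1 - W' := by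
    conv_rhs => rw [← hW'fix]
    noncomm_ring
  have hsW : (1 + (h + h)) * W = 1 := by
    calc (1 + (h + h)) * W = W + (h * W + h * W) := by noncomm_ring
      _ = W + (1 - W) := by rw [ehW]
      _ = 1 := by noncomm_ring
  have hW's : W' * (1 + (h + h)) = 1 := by
    calc W' * (1 + (h + h)) = W' + (W' * h + W' * h) := by noncomm_ring
      _ = W' + (1 - W') := by rw [ehW']
      _ = 1 := by noncomm_ring
  have hWW' : W = W' := by
    calc W = (W' * (1 + (h + h))) * W := by rw [hW's, one_mul]
      _ = W' * ((1 + (h + h)) * W) := by rw [mul_assoc]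
      _ = W' := by rw [hsW, mul_one]
  have hWs : W * (1 + (h + h)) = 1 := by rw [hWW']; exact hW's
  -- h commutes with W
  have hhW : h * W = W * h := by
    have key : h * W - W * h =
        -(h * (h * W - W * h)) - h * (h * W - W * h) := by
      conv_lhs => rw [← hWfix]
      noncomm_ring
    have hz : h * W - W * h = 0 := by
      refine vanish fun N hN => ?_
      have h2 := ((shiftL hh0 hN).neg).sub (shiftL hh0 hN)
      exact (eqN_of_eq (N+1) key).trans (h2.trans_eq (by simp))
    exact sub_eq_zero.mp hz
  -- u commutes with W
  have huW : u * W = W * u := by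
    have e1 : u * (h * W) = h * (u * W) := by
      calc u * (h * W) = (u * h) * W := by rw [mul_assoc]
        _ = (h * u) * W := by rw [huh]
        _ = h * (u * W) := by rw [mul_assoc]
    have key : u * W - W * u =
        -(h * (u * W - W * u)) - h * (u * W - W * u) := by
      calc u * W - W * u
          = ((h * W) * u - u * (h * W)) + ((h * W) * u - u * (h * W)) := by
            conv_lhs => rw [← hWfix]
            noncomm_ring
        _ = (h * (W * u) - h * (u * W)) + (h * (W * u) - h * (u * W)) := by
            rw [e1, mul_assoc]
        _ = -(h * (u * W - W * u)) - h * (u * W - W * u) := by noncomm_ring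
    have hz : u * W - W * u = 0 := by
      refine vanish fun N hN => ?_
      have h2 := ((shiftL hh0 hN).neg).sub (shiftL hh0 hN)
      exact (eqN_of_eq (N+1) key).trans (h2.trans_eq (by simp))
    exact sub_eq_zero.mp hz
  -- the projection P' = (u + h) * W
  have hWa : W * (u + h) = (u + h) * W := by
    calc W * (u + h) = W * u + W * h := by noncomm_ring
      _ = u * W + h * W := by rw [← huW, ← hhW]
      _ = (u + h) * W := by noncomm_ring
  have hu2 : u * u = (h * h + h) + u := by
    rw [hF2, hxdef]; noncomm_ring
  have haa : (u + h) * (u + h) = (u + h) * (1 + (h + h)) := by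
    calc (u + h) * (u + h) = u * u + (u * h + (h * u + h * h)) := by noncomm_ring
      _ = ((h * h + h) + u) + (u * h + (u * h + h * h)) := by rw [hu2, ← huh]
      _ = (u + h) * (1 + (h + h)) := by noncomm_ring
  have hPP : ((u + h) * W) * ((u + h) * W) = (u + h) * W := by
    calc ((u + h) * W) * ((u + h) * W) = (u + h) * ((W * (u + h)) * W) := by noncomm_ring
      _ = (u + h) * (((u + h) * W) * W) := by rw [hWa]
      _ = ((u + h) * (u + h)) * (W * W) := by noncomm_ring
      _ = ((u + h) * (1 + (h + h))) * (W * W) := by rw [haa]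
      _ = (u + h) * ((1 + (h + h)) * W * W) := by noncomm_ring
      _ = (u + h) * W := by rw [hsW, one_mul]
  -- star invariance
  have hMSu : MS D u = u := by
    rw [hu]
    refine Matrix.ext fun i j => ?_
    rw [MS_apply]
    show ast D (cu D (P₀ j i)) = cu D (P₀ i j)
    rw [ast_cu, hDst, hstP₀]
  have hMSx : MS D x = x := by
    rw [hxdef, MS_sub, MS_mul, hMSu]
  have hCPsi : Contr D (fun Y => 1 - (Y * Y) * x) := by
    intro N Y Y' hYY
    exact (EqN.refl D (N+1) 1).sub (shiftR' hx0 (EqN.mul hYY hYY))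
  have hPsig : 1 - (g * g) * x = g := by
    have e : (g * g) * x = (x * g) * g := by
      calc (g * g) * x = g * (g * x) := by rw [mul_assoc]
        _ = g * (x * g) := by rw [← hxg]
        _ = (g * x) * g := by rw [mul_assoc]
        _ = (x * g) * g := by rw [← hxg]
    rw [e]; exact hgfix
  have hPsiMSg : 1 - (MS D g * MS D g) * x = MS D g := by
    conv_rhs => rw [← hgfix]
    rw [MS_sub, MS_one, MS_mul, MS_mul, hMSx]
    rw [show MS D g * (MS D g * x) = (MS D g * MS D g) * x from (mul_assoc _ _ _).symm]
  have hMSg : MS D g = g := fixPt_unique hCPsi hPsiMSg hPsig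
  have hMSh : MS D h = h := by
    rw [hhdef, MS_mul, hMSx, hMSg, ← hxg]
  have hMSW : MS D W = W := by
    have h1 : 1 - (MS D W * h + MS D W * h) = MS D W := by
      conv_rhs => rw [← hWfix]
      rw [MS_sub, MS_one, MS_add, MS_mul, hMSh]
    have h2 : 1 - (W * h + W * h) = W := by
      rw [← hhW]; exact hWfix
    exact fixPt_unique hCW' h1 h2
  have hMSP : MS D ((u + h) * W) = (u + h) * W := by
    rw [MS_mul, hMSW, MS_add, hMSu, hMSh, hWa]
  -- constant term of the projection
  have hepsW : ∀ l j, co D 0 (W l j) = if l = j then 1 else 0 := by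
    intro l j
    have h1 : co D 0 (W l j) = co D 0 ((1 - (h * W + h * W)) l j) := by rw [hWfix]
    rw [h1, Matrix.sub_apply, Matrix.add_apply, co_sub, co_add,
      (hh0.mulR W) l j, add_zero, sub_zero, Matrix.one_apply]
    split
    · rw [co_one]; simp
    · rw [co_zero]
  have hepsP : ∀ i j, co D 0 (((u + h) * W) i j) = P₀ i j := by
    intro i j
    rw [co_mul_zero]
    have e1 : ∀ l, co D 0 ((u + h) i l) = P₀ i l := by
      intro l
      rw [Matrix.add_apply, co_add, hh0 i l, add_zero, hu, co_emb]
      simp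
    calc ∑ l, co D 0 ((u + h) i l) * co D 0 (W l j)
        = ∑ l, P₀ i l * if l = j then 1 else 0 := by
          exact Finset.sum_congr rfl fun l _ => by rw [e1 l, hepsW l j]
      _ = P₀ i j := by simp
  -- transport back to PowerSeries (Matrix)
  refine ⟨PowerSeries.mk fun n => Matrix.of fun i j => co D n (((u + h) * W) i j), ?_, ?_, ?_⟩
  · rw [PowerSeries.coeff_mk]
    refine Matrix.ext fun i j => ?_
    rw [Matrix.of_apply]
    exact hepsP i j
  · have hTP : toMat D (PowerSeries.mk fun n => Matrix.of fun i j =>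
        co D n (((u + h) * W) i j)) = (u + h) * W := by
      refine Matrix.ext fun i j => aux_ext D fun n => ?_
      rw [co_toMat, PowerSeries.coeff_mk, Matrix.of_apply]
    apply toMat_inj D
    rw [← hDCc, toMat_mul D, hTP, hPP]
  · have hTP : toMat D (PowerSeries.mk fun n => Matrix.of fun i j =>
        co D n (((u + h) * W) i j)) = (u + h) * W := by
      refine Matrix.ext fun i j => aux_ext D fun n => ?_
      rw [co_toMat, PowerSeries.coeff_mk, Matrix.of_apply]
    apply toMat_inj D
    rw [← hDst, toMat_star D, hTP, hMSP]
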